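/- Let x₁ < x₂ < ... < xₙ be real numbers with minimum gap δ₀ = min_i (x_{i+1} − x_i), and let x₁*, ..., xₙ* satisfy |x_i* − x_i| < δ₀/2 for all i with x_i* ≠ x_i for at least one i. Then the Kolmogorov distance between the empirical measures Pₙ of (x_i) and Pₙ* of (x_i*) equals 1/n. -/
import Mathlib


open Finset

/-- If `x₁ < ⋯ < xₙ` have all gaps at least `δ₀ > 0`, and the perturbed points
`x*` satisfy `|x*ᵢ − xᵢ| < δ₀/2` with at least one point actually altered, then the
Kolmogorov distance between the two empirical measures equals `1/n`. -/
theorem statement_1 (n : ℕ) (hn : 0 < n) (x xs : Fin n → ℝ) (δ₀ : ℝ) (hδ₀ : 0 < δ₀)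
    (hmono : StrictMono x)
    (hgap : ∀ i j : Fin n, (i : ℕ) + 1 = j → δ₀ ≤ x j - x i)
    (hclose : ∀ i, |xs i - x i| < δ₀ / 2)
    (hmoved : ∃ i, xs i ≠ x i) :
    (⨆ t : ℝ,
        |((univ.filter fun i => x i ≤ t).card : ℝ) / n -
          ((univ.filter fun i => xs i ≤ t).card : ℝ) / n|) = 1 / n := by
  have hn' : (0:ℝ) < n := by exact_mod_cast hn
  -- separation of the original points
  have key : ∀ i j : Fin n, i < j → δ₀ ≤ x j - x i := by
    intro i j hij
    have h1 : (i : ℕ) + 1 < n := lt_of_le_of_lt (Nat.succ_le_of_lt hij) j.isLt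
    have h2 : δ₀ ≤ x ⟨(i : ℕ) + 1, h1⟩ - x i := hgap i ⟨(i : ℕ) + 1, h1⟩ rfl
    have h3 : x ⟨(i : ℕ) + 1, h1⟩ ≤ x j := hmono.monotone (by
      show (i : ℕ) + 1 ≤ (j : ℕ); exact Nat.succ_le_of_lt hij)
    linarith
  have hsep : ∀ i j : Fin n, i ≠ j → δ₀ ≤ |x i - x j| := by
    intro i j hij
    rcases lt_or_gt_of_ne hij with h | h
    · calc δ₀ ≤ x j - x i := key i j h
        _ ≤ |x i - x j| := by rw [abs_sub_comm]; exact le_abs_self _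
    · calc δ₀ ≤ x i - x j := key j i h
        _ ≤ |x i - x j| := le_abs_self _
  -- a disagreement index must be close to t
  have hD : ∀ (t : ℝ) (i : Fin n), ¬ (x i ≤ t ↔ xs i ≤ t) → |t - x i| < δ₀ / 2 := by
    intro t i h
    have hc := hclose i
    rw [abs_lt] at hc ⊢
    rcases le_or_gt (x i) t with h1 | h1
    · have h2 : ¬ xs i ≤ t := fun h2 => h ⟨fun _ => h2, fun _ => h1⟩
      push_neg at h2
      constructor <;> linarith
    · have h2 : xs i ≤ t := by
        by_contra h2
        push_neg at h2
        exact h (iff_of_false (not_le.mpr h1) (not_le.mpr h2))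
      constructor <;> linarith
  set f : ℝ → ℝ := fun t =>
    |((univ.filter fun i => x i ≤ t).card : ℝ) / n -
          ((univ.filter fun i => xs i ≤ t).card : ℝ) / n| with hf
  -- the uniform bound
  have hbound : ∀ t, f t ≤ 1 / n := by
    intro t
    set A := univ.filter fun i : Fin n => x i ≤ t with hA
    set B := univ.filter fun i : Fin n => xs i ≤ t with hB
    have hcard : ((A \ B) ∪ (B \ A)).card ≤ 1 := by
      apply Finset.card_le_one.mpr
      intro a ha b hb
      have da : ¬ (x a ≤ t ↔ xs a ≤ t) := by
        simp only [Finset.mem_union, Finset.mem_sdiff, hA, hB, Finset.mem_filter,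
          Finset.mem_univ, true_and] at ha
        tauto
      have db : ¬ (x b ≤ t ↔ xs b ≤ t) := by
        simp only [Finset.mem_union, Finset.mem_sdiff, hA, hB, Finset.mem_filter,
          Finset.mem_univ, true_and] at hb
        tauto
      by_contra hne
      have h1 := hD t a da
      have h2 := hD t b db
      have h3 := hsep a b hne
      have : |x a - x b| < δ₀ := by
        calc |x a - x b| ≤ |x a - t| + |t - x b| := abs_sub_le _ _ _
          _ < δ₀ := by rw [abs_sub_comm (x a) t]; linarith
      linarith
    have hAB : (A \ B).card + (B \ A).card ≤ 1 := by
      rwa [Finset.card_union_of_disjoint (disjoint_sdiff_sdiff)] at hcard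
    have h1 : A.card ≤ B.card + (A \ B).card := by
      calc A.card ≤ (B ∪ (A \ B)).card := Finset.card_le_card (by
            intro a ha
            simp only [Finset.mem_union, Finset.mem_sdiff]
            by_cases h : a ∈ B <;> tauto)
        _ ≤ B.card + (A \ B).card := Finset.card_union_le _ _
    have h2 : B.card ≤ A.card + (B \ A).card := by
      calc B.card ≤ (A ∪ (B \ A)).card := Finset.card_le_card (by
            intro a ha
            simp only [Finset.mem_union, Finset.mem_sdiff]
            by_cases h : a ∈ A <;> tauto)
        _ ≤ A.card + (B \ A).card := Finset.card_union_le _ _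
    have habs : |(A.card : ℝ) - (B.card : ℝ)| ≤ 1 := by
      rw [abs_le]
      constructor
      · have := h2
        have h1' : (B.card : ℝ) ≤ (A.card : ℝ) + ((B \ A).card : ℝ) := by exact_mod_cast h2
        have h2' : ((A \ B).card : ℝ) + ((B \ A).card : ℝ) ≤ 1 := by exact_mod_cast hAB
        have h3' : (0:ℝ) ≤ ((A \ B).card : ℝ) := by positivity
        linarith
      · have h1' : (A.card : ℝ) ≤ (B.card : ℝ) + ((A \ B).card : ℝ) := by exact_mod_cast h1
        have h2' : ((A \ B).card : ℝ) + ((B \ A).card : ℝ) ≤ 1 := by exact_mod_cast hAB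
        have h3' : (0:ℝ) ≤ ((B \ A).card : ℝ) := by positivity
        linarith
    show |(A.card : ℝ) / n - (B.card : ℝ) / n| ≤ 1 / n
    rw [div_sub_div_same, abs_div, abs_of_pos hn']
    gcongr
  -- the witness
  obtain ⟨i₀, hi₀⟩ := hmoved
  set t₀ := min (x i₀) (xs i₀) with ht₀def
  have ht₀ : |t₀ - x i₀| < δ₀ / 2 := by
    rcases le_total (x i₀) (xs i₀) with h | h
    · rw [ht₀def, min_eq_left h]
      simpa using (half_pos hδ₀)
    · rw [ht₀def, min_eq_right h]
      exact hclose i₀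
  have hagree : ∀ j : Fin n, j ≠ i₀ → (x j ≤ t₀ ↔ xs j ≤ t₀) := by
    intro j hj
    by_contra h
    have h1 := hD t₀ j h
    have h2 := hsep j i₀ hj
    have : |x j - x i₀| < δ₀ := by
      calc |x j - x i₀| ≤ |x j - t₀| + |t₀ - x i₀| := abs_sub_le _ _ _
        _ < δ₀ := by rw [abs_sub_comm (x j) t₀]; linarith
    linarith
  have keyins : ∀ (u v : Fin n → ℝ), (∀ j : Fin n, j ≠ i₀ → (u j ≤ t₀ ↔ v j ≤ t₀)) →
      u i₀ ≤ t₀ → ¬ v i₀ ≤ t₀ →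
      (univ.filter fun i => u i ≤ t₀).card = (univ.filter fun i => v i ≤ t₀).card + 1 := by
    intro u v hagr hu hv
    have heq : (univ.filter fun i => u i ≤ t₀) =
        insert i₀ (univ.filter fun i => v i ≤ t₀) := by
      ext j
      simp only [Finset.mem_insert, Finset.mem_filter, Finset.mem_univ, true_and]
      by_cases hj : j = i₀
      · subst hj; simp [hu]
      · rw [hagr j hj]; simp [hj]
    rw [heq, Finset.card_insert_of_notMem (by simp [hv])]
  have hft₀ : f t₀ = 1 / n := by
    rcases lt_or_gt_of_ne hi₀ with h | h
    · -- xs i₀ < x i₀ : t₀ = xs i₀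
      have ht : t₀ = xs i₀ := min_eq_right h.le
      have h1 : xs i₀ ≤ t₀ := ht.ge
      have h2 : ¬ x i₀ ≤ t₀ := by rw [ht]; exact not_le.mpr h
      have hc := keyins xs x (fun j hj => (hagree j hj).symm) h1 h2
      show |((univ.filter fun i => x i ≤ t₀).card : ℝ) / n -
          ((univ.filter fun i => xs i ≤ t₀).card : ℝ) / n| = 1 / n
      rw [hc]
      push_cast
      rw [div_sub_div_same]
      have : ((univ.filter fun i => x i ≤ t₀).card : ℝ) -
          (((univ.filter fun i => x i ≤ t₀).card : ℝ) + 1) = -1 := by ring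
      rw [this, abs_div, abs_of_pos hn']
      norm_num
    · -- x i₀ < xs i₀ : t₀ = x i₀
      have ht : t₀ = x i₀ := min_eq_left h.le
      have h1 : x i₀ ≤ t₀ := ht.ge
      have h2 : ¬ xs i₀ ≤ t₀ := by rw [ht]; exact not_le.mpr h
      have hc := keyins x xs hagree h1 h2
      show |((univ.filter fun i => x i ≤ t₀).card : ℝ) / n -
          ((univ.filter fun i => xs i ≤ t₀).card : ℝ) / n| = 1 / n
      rw [hc]
      push_cast
      rw [div_sub_div_same]
      have : (((univ.filter fun i => xs i ≤ t₀).card : ℝ) + 1) -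
          ((univ.filter fun i => xs i ≤ t₀).card : ℝ) = 1 := by ring
      rw [this, abs_div, abs_of_pos hn']
      norm_num
  have hbdd : BddAbove (Set.range f) := by
    refine ⟨1 / n, ?_⟩
    rintro y ⟨t, rfl⟩
    exact hbound t
  apply le_antisymm
  · exact ciSup_le hbound
  · calc (1:ℝ) / n = f t₀ := hft₀.symm
      _ ≤ ⨆ t, f t := le_ciSup hbdd t₀
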